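/- arXiv:1512.04297 — 2 statements merged into one kernel-verified Lean document; each statement's English description precedes it below -/
import Mathlib

section
/- For every integer m ≥ 2: (a) the maximum cardinality of a partial 2-spread in 𝔽_2^{2m} equals (2^{2m} − 1)/3; (b) the maximum cardinality of a partial 2-spread in 𝔽_2^{2m+1} equals (2^{2m+1} − 5)/3. -/
/-- A partial `k`-spread in `𝔽_2^n`: a set of `k`-dimensional subspaces
any two distinct members of which intersect trivially. -/
def IsPartialSpread {n : ℕ} (k : ℕ)
    (S : Finset (Submodule (ZMod 2) (Fin n → ZMod 2))) : Prop :=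
  (∀ U ∈ S, Module.finrank (ZMod 2) U = k) ∧
  ∀ U ∈ S, ∀ V ∈ S, U ≠ V → U ⊓ V = ⊥

namespace SpreadAux
open Module Finset


noncomputable def NZ {N : ℕ} (U : Submodule (ZMod 2) (Fin N → ZMod 2)) :
    Finset (Fin N → ZMod 2) :=
  letI := Classical.decPred (· ∈ U)
  (Finset.univ.filter (· ∈ U)).erase 0

lemma mem_NZ {N : ℕ} {U : Submodule (ZMod 2) (Fin N → ZMod 2)} {v : Fin N → ZMod 2} :
    v ∈ NZ U ↔ v ∈ U ∧ v ≠ 0 := by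
  rw [NZ]
  letI := Classical.decPred (· ∈ U)
  simp [Finset.mem_erase, Finset.mem_filter, and_comm]

lemma card_NZ {N : ℕ} (U : Submodule (ZMod 2) (Fin N → ZMod 2)) :
    (NZ U).card = 2 ^ (finrank (ZMod 2) U) - 1 := by
  rw [NZ]
  letI := Classical.decPred (· ∈ U)
  rw [Finset.card_erase_of_mem (by simp [U.zero_mem])]
  congr 1
  rw [← Fintype.card_subtype]
  have h := card_eq_pow_finrank (K := ZMod 2) (V := U)
  simpa [ZMod.card] using h

lemma disj_NZ {N : ℕ} {U V : Submodule (ZMod 2) (Fin N → ZMod 2)} (h : U ⊓ V = ⊥) :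
    Disjoint (NZ U) (NZ V) := by
  rw [Finset.disjoint_left]
  intro v hvU hvV
  rw [mem_NZ] at hvU hvV
  exact hvU.2 ((Submodule.mem_bot _).mp (h ▸ Submodule.mem_inf.mpr ⟨hvU.1, hvV.1⟩))

lemma three_mul_card_le {N : ℕ} (S : Finset (Submodule (ZMod 2) (Fin N → ZMod 2)))
    (hdim : ∀ U ∈ S, finrank (ZMod 2) U = 2)
    (hint : ∀ U ∈ S, ∀ V ∈ S, U ≠ V → U ⊓ V = ⊥) :
    3 * S.card + 1 ≤ 2 ^ N := by
  classical
  have hbU : (S.biUnion NZ).card = 3 * S.card := by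
    rw [Finset.card_biUnion (fun U hU V hV hUV => disj_NZ (hint U hU V hV hUV))]
    rw [Finset.sum_congr rfl (fun U hU => by rw [card_NZ, hdim U hU])]
    simp [Finset.sum_const, mul_comm]
  have hsub : S.biUnion NZ ⊆ Finset.univ.erase 0 := by
    intro v hv
    obtain ⟨U, _, hvU⟩ := Finset.mem_biUnion.mp hv
    exact Finset.mem_erase.mpr ⟨(mem_NZ.mp hvU).2, Finset.mem_univ v⟩
  have := Finset.card_le_card hsub
  rw [hbU, Finset.card_erase_of_mem (Finset.mem_univ 0)] at this
  have hcard : Fintype.card (Fin N → ZMod 2) = 2 ^ N := by simp [ZMod.card]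
  rw [Finset.card_univ, hcard] at this
  have : 1 ≤ 2 ^ N := Nat.one_le_two_pow
  omega


lemma finrank_inf_ker {N : ℕ} (U : Submodule (ZMod 2) (Fin N → ZMod 2))
    (hU : finrank (ZMod 2) U = 2)
    (f : (Fin N → ZMod 2) →ₗ[ZMod 2] ZMod 2) (hnle : ¬ U ≤ LinearMap.ker f) :
    finrank (ZMod 2) (U ⊓ LinearMap.ker f : Submodule (ZMod 2) (Fin N → ZMod 2)) = 1 := by
  set ψ := f ∘ₗ U.subtype with hψ
  have hψ0 : ψ ≠ 0 := by
    intro h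
    refine hnle (fun x hx => ?_)
    have : ψ ⟨x, hx⟩ = 0 := by rw [h]; rfl
    simpa [hψ] using this
  have hr0 : LinearMap.range ψ ≠ ⊥ := fun h => hψ0 (LinearMap.range_eq_bot.mp h)
  have hrle : finrank (ZMod 2) (LinearMap.range ψ) ≤ 1 := by
    have := Submodule.finrank_le (LinearMap.range ψ)
    simpa using this
  have hr1 : finrank (ZMod 2) (LinearMap.range ψ) = 1 := by
    rcases Nat.lt_or_ge (finrank (ZMod 2) (LinearMap.range ψ)) 1 with h | h
    · exact absurd (Submodule.finrank_eq_zero.mp (by omega)) hr0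
    · omega
  have hrn := LinearMap.finrank_range_add_finrank_ker ψ
  rw [hr1, hU] at hrn
  have hker : LinearMap.ker ψ = Submodule.comap U.subtype (LinearMap.ker f) := by
    rw [hψ, LinearMap.ker_comp]
  have hmap : Submodule.map U.subtype (LinearMap.ker ψ) = U ⊓ LinearMap.ker f := by
    rw [hker, Submodule.map_comap_subtype]
  rw [← hmap, Submodule.finrank_map_subtype_eq]
  omega

lemma ub_odd {n : ℕ} (hn : 1 ≤ n) (S : Finset (Submodule (ZMod 2) (Fin (2*n+1) → ZMod 2)))
    (hdim : ∀ U ∈ S, finrank (ZMod 2) U = 2)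
    (hint : ∀ U ∈ S, ∀ V ∈ S, U ≠ V → U ⊓ V = ⊥)
    (hcard : 3 * S.card + 2 = 2 ^ (2*n+1)) : False := by
  classical
  -- the covered set
  set B := S.biUnion NZ with hB
  have hbU : B.card = 3 * S.card := by
    rw [hB, Finset.card_biUnion (fun U hU V hV hUV => disj_NZ (hint U hU V hV hUV))]
    rw [Finset.sum_congr rfl (fun U hU => by rw [card_NZ, hdim U hU])]
    simp [mul_comm]
  have hsub : B ⊆ Finset.univ.erase 0 := by
    intro v hv
    obtain ⟨U, _, hvU⟩ := Finset.mem_biUnion.mp hv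
    exact Finset.mem_erase.mpr ⟨(mem_NZ.mp hvU).2, Finset.mem_univ v⟩
  have hucard : (Finset.univ.erase (0 : Fin (2*n+1) → ZMod 2)).card = 2 ^ (2*n+1) - 1 := by
    rw [Finset.card_erase_of_mem (Finset.mem_univ 0), Finset.card_univ]
    simp [ZMod.card]
  -- exactly one hole x
  have hH : ((Finset.univ.erase (0 : Fin (2*n+1) → ZMod 2)) \ B).card = 1 := by
    rw [Finset.card_sdiff_of_subset hsub, hucard, hbU]
    have : 1 ≤ 2 ^ (2*n+1) := Nat.one_le_two_pow
    omega
  obtain ⟨x, hx⟩ := Finset.card_eq_one.mp hH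
  have hx0 : x ≠ 0 := by
    have : x ∈ Finset.univ.erase (0 : Fin (2*n+1) → ZMod 2) \ B := hx ▸ Finset.mem_singleton_self x
    exact (Finset.mem_erase.mp (Finset.mem_sdiff.mp this).1).1
  have hcover : ∀ v : Fin (2*n+1) → ZMod 2, v ≠ 0 → v ≠ x → v ∈ B := by
    intro v hv0 hvx
    by_contra hvB
    have : v ∈ Finset.univ.erase (0 : Fin (2*n+1) → ZMod 2) \ B :=
      Finset.mem_sdiff.mpr ⟨Finset.mem_erase.mpr ⟨hv0, Finset.mem_univ v⟩, hvB⟩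
    rw [hx, Finset.mem_singleton] at this
    exact hvx this
  -- hyperplane avoiding x
  obtain ⟨i, hi⟩ : ∃ i, x i ≠ 0 := by
    by_contra h
    push_neg at h
    exact hx0 (funext h)
  set f := LinearMap.proj (R := ZMod 2) (φ := fun _ : Fin (2*n+1) => ZMod 2) i with hf
  set W := LinearMap.ker f with hW
  have hxW : x ∉ W := by
    intro h
    exact hi (LinearMap.mem_ker.mp h)
  have hWrank : finrank (ZMod 2) W = 2*n := by
    rw [hW]
    have hsurj : Function.Surjective f := fun c => ⟨fun _ => c, rfl⟩
    have h1 := LinearMap.finrank_range_add_finrank_ker f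
    rw [LinearMap.range_eq_top.mpr hsurj, finrank_top, Module.finrank_self,
      Module.finrank_fin_fun] at h1
    omega
  -- count nonzero vectors of W
  have hWNZ : NZ W = S.biUnion (fun U => NZ (U ⊓ W)) := by
    apply Finset.Subset.antisymm
    · intro v hv
      rw [mem_NZ] at hv
      have hvx : v ≠ x := fun h => hxW (h ▸ hv.1)
      obtain ⟨U, hU, hvU⟩ := Finset.mem_biUnion.mp (hcover v hv.2 hvx)
      exact Finset.mem_biUnion.mpr ⟨U, hU,
        mem_NZ.mpr ⟨Submodule.mem_inf.mpr ⟨(mem_NZ.mp hvU).1, hv.1⟩, hv.2⟩⟩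
    · intro v hv
      obtain ⟨U, hU, hvU⟩ := Finset.mem_biUnion.mp hv
      rw [mem_NZ] at hvU ⊢
      exact ⟨(Submodule.mem_inf.mp hvU.1).2, hvU.2⟩
  have hdisj2 : ∀ U ∈ S, ∀ V ∈ S, U ≠ V → Disjoint (NZ (U ⊓ W)) (NZ (V ⊓ W)) := by
    intro U hU V hV hUV
    apply disj_NZ
    rw [eq_bot_iff, ← hint U hU V hV hUV]
    exact inf_le_inf inf_le_left inf_le_left
  have hcount : (NZ W).card = ∑ U ∈ S, (NZ (U ⊓ W)).card := by
    rw [hWNZ, Finset.card_biUnion hdisj2]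
  -- evaluate each term
  have hterm : ∀ U ∈ S, (NZ (U ⊓ W)).card = if U ≤ W then 3 else 1 := by
    intro U hU
    by_cases h : U ≤ W
    · rw [if_pos h, card_NZ, inf_eq_left.mpr h, hdim U hU]
      norm_num
    · rw [if_neg h, card_NZ]
      have hfr := finrank_inf_ker U (hdim U hU) f (by rw [← hW] at *; exact h)
      rw [← hW] at hfr
      rw [hfr]
      norm_num

  rw [Finset.sum_congr rfl hterm] at hcount
  rw [Finset.sum_ite, Finset.sum_const, Finset.sum_const, smul_eq_mul, smul_eq_mul] at hcount
  have hsplit := Finset.card_filter_add_card_filter_not (s := S) (p := (· ≤ W))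
  set a := (S.filter (· ≤ W)).card
  have hcW : (NZ W).card = 2 ^ (2*n) - 1 := by rw [card_NZ, hWrank]
  have h2 : (2:ℕ) ^ (2*n) = 2 * 2 ^ (2*n-1) := by
    rw [← pow_succ']
    congr 1
    omega
  have h3 : (2:ℕ) ^ (2*n+1) = 2 * 2 ^ (2*n) := by rw [pow_succ']
  have hpos : 1 ≤ (2:ℕ) ^ (2*n-1) := Nat.one_le_two_pow
  omega

lemma exists_phi (d : ℕ) (hd : 2 ≤ d) :
    ∃ φ : (Fin d → ZMod 2) →ₗ[ZMod 2] (Fin d → ZMod 2),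
      ∀ a b : ZMod 2, (a ≠ 0 ∨ b ≠ 0) →
        Function.Injective (fun w => a • w + b • φ w) := by
  haveI : Fact (Nat.Prime 2) := ⟨Nat.prime_two⟩
  set F := GaloisField 2 d with hF
  have hd0 : d ≠ 0 := by omega
  have hfr : finrank (ZMod 2) F = d := GaloisField.finrank 2 hd0
  have e : (Fin d → ZMod 2) ≃ₗ[ZMod 2] F :=
    LinearEquiv.ofFinrankEq _ _ (by rw [hfr, Module.finrank_fin_fun])
  have hcard : 4 ≤ Nat.card F := by
    rw [GaloisField.card 2 d hd0]
    calc (4:ℕ) = 2^2 := rfl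
    _ ≤ 2^d := Nat.pow_le_pow_right (by norm_num) hd
  obtain ⟨x, hx0, hx1⟩ : ∃ x : F, x ≠ 0 ∧ x ≠ 1 := by
    by_contra hcon
    push_neg at hcon
    haveI : Fintype F := Fintype.ofFinite F
    haveI : DecidableEq F := Classical.decEq F
    have : (Finset.univ : Finset F) ⊆ {0, 1} := by
      intro y _
      rcases eq_or_ne y 0 with h | h
      · simp [h]
      · simp [hcon y h]
    have := Finset.card_le_card this
    rw [Finset.card_univ] at this
    have h2 : ({0, 1} : Finset F).card ≤ 2 := Finset.card_insert_le _ _ |>.trans (by simp)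
    rw [Nat.card_eq_fintype_card] at hcard
    omega
  refine ⟨e.symm.toLinearMap ∘ₗ (LinearMap.mulLeft (ZMod 2) x) ∘ₗ e.toLinearMap, ?_⟩
  intro a b hab w w' h
  simp only [LinearMap.comp_apply, LinearEquiv.coe_coe, LinearMap.mulLeft_apply] at h
  have key : ∀ u : Fin d → ZMod 2,
      a • u + b • e.symm (x * e u) = e.symm ((a • (1:F) + b • x) * e u) := by
    intro u
    rw [add_mul, smul_mul_assoc, smul_mul_assoc, one_mul]
    rw [map_add, map_smul, map_smul, LinearEquiv.symm_apply_apply]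
  rw [key, key] at h
  have h2 := e.symm.injective h
  have hc : a • (1:F) + b • x ≠ 0 := by
    have hx1' : (1:F) + x ≠ 0 := by
      intro hcon
      have : x = -1 := eq_neg_of_add_eq_zero_right hcon
      rw [CharTwo.neg_eq] at this
      exact hx1 this
    have h01 : ∀ c : ZMod 2, c = 0 ∨ c = 1 := by
      intro c; fin_cases c
      · exact Or.inl rfl
      · exact Or.inr rfl
    rcases h01 a with rfl | rfl <;> rcases h01 b with rfl | rfl <;> simp_all
  exact e.injective (mul_left_cancel₀ hc h2)

section Transport
variable {V V' : Type*} [AddCommGroup V] [Module (ZMod 2) V]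
  [AddCommGroup V'] [Module (ZMod 2) V']

lemma transport (e : V ≃ₗ[ZMod 2] V') (S : Finset (Submodule (ZMod 2) V))
    (hdim : ∀ U ∈ S, finrank (ZMod 2) U = 2)
    (hint : ∀ U ∈ S, ∀ W ∈ S, U ≠ W → U ⊓ W = ⊥) :
    ∃ T : Finset (Submodule (ZMod 2) V'),
      (∀ U ∈ T, finrank (ZMod 2) U = 2) ∧
      (∀ U ∈ T, ∀ W ∈ T, U ≠ W → U ⊓ W = ⊥) ∧ T.card = S.card := by
  classical
  refine ⟨S.image (Submodule.map (e : V →ₗ[ZMod 2] V')), ?_, ?_, ?_⟩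
  · intro U hU
    obtain ⟨U₀, hU₀, rfl⟩ := Finset.mem_image.mp hU
    rw [LinearEquiv.finrank_map_eq]
    exact hdim U₀ hU₀
  · intro U hU W hW hUW
    obtain ⟨U₀, hU₀, rfl⟩ := Finset.mem_image.mp hU
    obtain ⟨W₀, hW₀, rfl⟩ := Finset.mem_image.mp hW
    have hne : U₀ ≠ W₀ := fun h => hUW (by rw [h])
    rw [← Submodule.map_inf (e : V →ₗ[ZMod 2] V') e.injective, hint U₀ hU₀ W₀ hW₀ hne,
      Submodule.map_bot]
  · exact Finset.card_image_of_injective _ (Submodule.map_injective_of_injective e.injective)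

end Transport

lemma step (d : ℕ) (hd : 2 ≤ d) (S : Finset (Submodule (ZMod 2) (Fin d → ZMod 2)))
    (hdim : ∀ U ∈ S, finrank (ZMod 2) U = 2)
    (hint : ∀ U ∈ S, ∀ V ∈ S, U ≠ V → U ⊓ V = ⊥) :
    ∃ T : Finset (Submodule (ZMod 2) (Fin (d+2) → ZMod 2)),
      (∀ U ∈ T, finrank (ZMod 2) U = 2) ∧
      (∀ U ∈ T, ∀ V ∈ T, U ≠ V → U ⊓ V = ⊥) ∧
      T.card = S.card + 2 ^ d := by
  classical
  obtain ⟨φ, hφ⟩ := exists_phi d hd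
  -- the ambient product space
  set P := (Fin 2 → ZMod 2) × (Fin d → ZMod 2) with hP
  set L : (Fin d → ZMod 2) → ((Fin 2 → ZMod 2) →ₗ[ZMod 2] (Fin d → ZMod 2)) :=
    fun w => (LinearMap.proj 0).smulRight w + (LinearMap.proj 1).smulRight (φ w) with hL
  have hLapp : ∀ w u, L w u = u 0 • w + u 1 • φ w := by
    intro w u
    simp [hL]
  set G : (Fin d → ZMod 2) → Submodule (ZMod 2) P :=
    fun w => LinearMap.range (LinearMap.prod LinearMap.id (L w)) with hG
  have mem_G : ∀ w p, p ∈ G w ↔ p.2 = L w p.1 := by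
    intro w p
    constructor
    · rintro ⟨u, rfl⟩
      rfl
    · intro h
      exact ⟨p.1, Prod.ext rfl h.symm⟩
  have hGrank : ∀ w, finrank (ZMod 2) (G w) = 2 := by
    intro w
    rw [hG]
    rw [LinearMap.finrank_range_of_inj, Module.finrank_fin_fun]
    intro u u' h
    exact congrArg Prod.fst h
  -- the distinguished vector (1,0) in Fin 2 → ZMod 2
  set u₀ : Fin 2 → ZMod 2 := fun j => if j = 0 then 1 else 0 with hu₀
  have hu₀0 : u₀ 0 = 1 := by simp [hu₀]
  have hu₀1 : u₀ 1 = 0 := by simp [hu₀]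
  have hLu₀ : ∀ w, L w u₀ = w := by
    intro w
    rw [hLapp, hu₀0, hu₀1, one_smul, zero_smul, add_zero]
  have hGinj : Function.Injective G := by
    intro w w' h
    have : (u₀, w) ∈ G w' := by
      rw [← h, mem_G, hLu₀]
    rw [mem_G, hLu₀] at this
    exact this
  have hnz : ∀ u : Fin 2 → ZMod 2, u ≠ 0 → (u 0 ≠ 0 ∨ u 1 ≠ 0) := by
    intro u hu
    by_contra hcon
    push_neg at hcon
    apply hu
    funext j
    fin_cases j
    · exact hcon.1
    · exact hcon.2
  have hGG : ∀ w w', w ≠ w' → G w ⊓ G w' = ⊥ := by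
    intro w w' hww
    rw [eq_bot_iff]
    rintro p hp
    obtain ⟨h1, h2⟩ := Submodule.mem_inf.mp hp
    rw [mem_G] at h1 h2
    rcases eq_or_ne p.1 0 with h0 | h0
    · have : p.2 = 0 := by rw [h1, h0, map_zero]
      rw [Submodule.mem_bot]
      exact Prod.ext h0 this
    · exfalso
      apply hww
      apply hφ (p.1 0) (p.1 1) (hnz p.1 h0)
      show p.1 0 • w + p.1 1 • φ w = p.1 0 • w' + p.1 1 • φ w'
      rw [← hLapp, ← hLapp]
      exact h1.symm.trans h2
  -- embedding of the old spread
  set emb : (Fin d → ZMod 2) →ₗ[ZMod 2] P := LinearMap.inr (ZMod 2) _ _ with hemb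
  have hembinj : Function.Injective emb := LinearMap.inr_injective
  have hmememb : ∀ (U : Submodule (ZMod 2) (Fin d → ZMod 2)) (p : P),
      p ∈ U.map emb ↔ p.1 = 0 ∧ p.2 ∈ U := by
    intro U p
    constructor
    · rintro ⟨z, hz, rfl⟩
      exact ⟨rfl, hz⟩
    · rintro ⟨h1, h2⟩
      exact ⟨p.2, h2, Prod.ext h1.symm rfl⟩
  have hembrank : ∀ U ∈ S, finrank (ZMod 2) (U.map emb) = 2 := by
    intro U hU
    rw [← (Submodule.equivMapOfInjective emb hembinj U).finrank_eq]
    exact hdim U hU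
  have hembint : ∀ U V : Submodule (ZMod 2) (Fin d → ZMod 2), U ⊓ V = ⊥ →
      (U.map emb) ⊓ (V.map emb) = ⊥ := by
    intro U V h
    rw [← Submodule.map_inf emb hembinj, h, Submodule.map_bot]
  have hGemb : ∀ (w : Fin d → ZMod 2) (U : Submodule (ZMod 2) (Fin d → ZMod 2)),
      (G w) ⊓ (U.map emb) = ⊥ := by
    intro w U
    rw [eq_bot_iff]
    intro p hp
    obtain ⟨h1, h2⟩ := Submodule.mem_inf.mp hp
    rw [mem_G] at h1
    rw [hmememb] at h2
    rw [Submodule.mem_bot]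
    have : p.2 = 0 := by rw [h1, h2.1, map_zero]
    exact Prod.ext h2.1 this
  have hGne : ∀ (w : Fin d → ZMod 2) (U : Submodule (ZMod 2) (Fin d → ZMod 2)),
      G w ≠ U.map emb := by
    intro w U h
    have hmem : (u₀, w) ∈ U.map emb := h ▸ ((mem_G w (u₀, w)).mpr (hLu₀ w).symm)
    have h0 := ((hmememb U _).mp hmem).1
    have hu0 : u₀ = 0 := h0
    have h00 : u₀ 0 = 0 := by rw [hu0]; rfl
    rw [hu₀0] at h00
    exact one_ne_zero h00
  set T₀ : Finset (Submodule (ZMod 2) P) :=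
    S.image (Submodule.map emb) ∪ Finset.univ.image G with hT₀
  have hT₀mem : ∀ A, A ∈ T₀ ↔ ((∃ U ∈ S, U.map emb = A) ∨ ∃ w, G w = A) := by
    intro A
    simp [hT₀, Finset.mem_union, Finset.mem_image]
  have hdim₀ : ∀ A ∈ T₀, finrank (ZMod 2) A = 2 := by
    intro A hA
    rcases (hT₀mem A).mp hA with ⟨U, hU, rfl⟩ | ⟨w, rfl⟩
    · exact hembrank U hU
    · exact hGrank w
  have hint₀ : ∀ A ∈ T₀, ∀ B ∈ T₀, A ≠ B → A ⊓ B = ⊥ := by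
    intro A hA B hB hne
    rcases (hT₀mem A).mp hA with ⟨U, hU, rfl⟩ | ⟨w, rfl⟩ <;>
      rcases (hT₀mem B).mp hB with ⟨V, hV, rfl⟩ | ⟨w', rfl⟩
    · exact hembint U V (hint U hU V hV (fun h => hne (by rw [h])))
    · rw [inf_comm]
      exact hGemb w' U
    · exact hGemb w V
    · exact hGG w w' (fun h => hne (by rw [h]))
  have hcard₀ : T₀.card = S.card + 2 ^ d := by
    rw [hT₀, Finset.card_union_of_disjoint, Finset.card_image_of_injective _
      (Submodule.map_injective_of_injective hembinj), Finset.card_image_of_injective _ hGinj,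
      Finset.card_univ]
    · congr 1
      simp [ZMod.card]
    · rw [Finset.disjoint_left]
      intro A hA hA'
      obtain ⟨U, hU, rfl⟩ := Finset.mem_image.mp hA
      obtain ⟨w, _, hw⟩ := Finset.mem_image.mp hA'
      exact hGne w U hw
  have efin : P ≃ₗ[ZMod 2] (Fin (d+2) → ZMod 2) :=
    LinearEquiv.ofFinrankEq _ _ (by
      rw [Module.finrank_prod, Module.finrank_fin_fun, Module.finrank_fin_fun,
        Module.finrank_fin_fun]
      omega)
  obtain ⟨T, h1, h2, h3⟩ := transport efin T₀ hdim₀ hint₀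
  exact ⟨T, h1, h2, by rw [h3, hcard₀]⟩

def Constructs (n : ℕ) : Prop :=
  ∃ S : Finset (Submodule (ZMod 2) (Fin n → ZMod 2)),
    (∀ U ∈ S, finrank (ZMod 2) U = 2) ∧
    (∀ U ∈ S, ∀ V ∈ S, U ≠ V → U ⊓ V = ⊥) ∧
    3 * S.card + (if Even n then 1 else 5) = 2 ^ n

lemma constructs_two : Constructs 2 := by
  refine ⟨{⊤}, ?_, ?_, ?_⟩
  · intro U hU
    rw [Finset.mem_singleton] at hU
    subst hU
    rw [finrank_top, Module.finrank_fin_fun]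
  · intro U hU V hV hUV
    rw [Finset.mem_singleton] at hU hV
    exact absurd (hU.trans hV.symm) hUV
  · simp

lemma constructs_three : Constructs 3 := by
  set f := LinearMap.proj (R := ZMod 2) (φ := fun _ : Fin 3 => ZMod 2) 2 with hf
  refine ⟨{LinearMap.ker f}, ?_, ?_, ?_⟩
  · intro U hU
    rw [Finset.mem_singleton] at hU
    subst hU
    have hsurj : Function.Surjective f := fun c => ⟨fun _ => c, rfl⟩
    have h1 := LinearMap.finrank_range_add_finrank_ker f
    rw [LinearMap.range_eq_top.mpr hsurj, finrank_top, Module.finrank_self,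
      Module.finrank_fin_fun] at h1
    omega
  · intro U hU V hV hUV
    rw [Finset.mem_singleton] at hU hV
    exact absurd (hU.trans hV.symm) hUV
  · simp [Nat.even_iff]

lemma constructs_step {d : ℕ} (hd : 2 ≤ d) (h : Constructs d) : Constructs (d + 2) := by
  obtain ⟨S, h1, h2, h3⟩ := h
  obtain ⟨T, g1, g2, g3⟩ := step d hd S h1 h2
  refine ⟨T, g1, g2, ?_⟩
  rw [g3]
  have heven : Even (d + 2) ↔ Even d := by simp [Nat.even_add]
  rw [if_congr heven rfl rfl]
  have : (2:ℕ) ^ (d + 2) = 4 * 2 ^ d := by ring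
  omega

lemma constructs_all : ∀ j : ℕ, Constructs (j + 2) ∧ Constructs (j + 3) := by
  intro j
  induction j with
  | zero => exact ⟨constructs_two, constructs_three⟩
  | succ k ih =>
    refine ⟨ih.2, ?_⟩
    have := constructs_step (d := k + 2) (by omega) ih.1
    exact this

lemma four_pow_mod_three (m : ℕ) : 4 ^ m % 3 = 1 := by
  rw [Nat.pow_mod]
  simp

lemma two_pow_two_mul_mod_three (m : ℕ) : 2 ^ (2 * m) % 3 = 1 := by
  rw [pow_mul]
  exact four_pow_mod_three m


end SpreadAux

/-- Maximum sizes of partial `2`-spreads in `𝔽_2^{2m}` and `𝔽_2^{2m+1}`. -/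
theorem partial_two_spread_max (m : ℕ) (hm : 2 ≤ m) :
    IsGreatest {c : ℕ | ∃ S : Finset (Submodule (ZMod 2) (Fin (2 * m) → ZMod 2)),
        IsPartialSpread 2 S ∧ S.card = c} ((2 ^ (2 * m) - 1) / 3) ∧
    IsGreatest {c : ℕ | ∃ S : Finset (Submodule (ZMod 2) (Fin (2 * m + 1) → ZMod 2)),
        IsPartialSpread 2 S ∧ S.card = c} ((2 ^ (2 * m + 1) - 5) / 3) := by
  have hmod : 2 ^ (2*m) % 3 = 1 := SpreadAux.two_pow_two_mul_mod_three m
  have hpow : (16:ℕ) ≤ 2 ^ (2*m) := by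
    calc (16:ℕ) = 2 ^ 4 := by norm_num
    _ ≤ 2 ^ (2*m) := Nat.pow_le_pow_right (by norm_num) (by omega)
  have hpow2 : (2:ℕ) ^ (2*m+1) = 2 * 2 ^ (2*m) := by rw [pow_succ']
  have hC : SpreadAux.Constructs (2*m) := by
    have h := (SpreadAux.constructs_all (2*m-2)).1
    have he : 2*m-2+2 = 2*m := by omega
    rwa [he] at h
  have hC' : SpreadAux.Constructs (2*m+1) := by
    have h := (SpreadAux.constructs_all (2*m-2)).2
    have he : 2*m-2+3 = 2*m+1 := by omega
    rwa [he] at h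
  constructor
  · constructor
    · obtain ⟨S, h1, h2, h3⟩ := hC
      rw [if_pos (even_two_mul m)] at h3
      exact ⟨S, ⟨h1, h2⟩, by omega⟩
    · rintro c ⟨S, ⟨h1, h2⟩, rfl⟩
      have := SpreadAux.three_mul_card_le S h1 h2
      omega
  · constructor
    · obtain ⟨S, h1, h2, h3⟩ := hC'
      rw [if_neg (by simp [Nat.even_add_one, parity_simps])] at h3
      exact ⟨S, ⟨h1, h2⟩, by omega⟩
    · rintro c ⟨S, ⟨h1, h2⟩, rfl⟩
      have hle := SpreadAux.three_mul_card_le S h1 h2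
      have hne : ¬ (3 * S.card + 2 = 2 ^ (2*m+1)) := fun h =>
        SpreadAux.ub_odd (by omega) S h1 h2 h
      omega
end

section
/- For every integer m ≥ 2: (a) the maximum cardinality of a partial 4-spread in 𝔽_2^{4m} equals (2^{4m} − 1)/15; (b) the maximum cardinality of a partial 4-spread in 𝔽_2^{4m+1} equals (2^{4m+1} − 17)/15; (c) the maximum cardinality of a partial 4-spread in 𝔽_2^{4m+2} equals (2^{4m+2} − 49)/15; (d) the maximum cardinality A of a partial 4-spread in 𝔽_2^{4m+3} satisfies (2^{4m+3} − 113)/15 ≤ A ≤ (2^{4m+3} − 53)/15. -/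
open Finset Matrix Module
set_option synthInstance.maxHeartbeats 1000000
set_option maxHeartbeats 2000000

namespace SpreadAux

variable {v : ℕ}

/-- weight of the functional `x ↦ a ⬝ᵥ x` on the point set `H`. -/
def wt (H : Finset (Fin v → ZMod 2)) (a : Fin v → ZMod 2) : ℕ :=
  (H.filter fun x => a ⬝ᵥ x = 1).card

lemma wt_zero (H : Finset (Fin v → ZMod 2)) : wt H 0 = 0 := by
  simp [wt]

lemma wt_le (H : Finset (Fin v → ZMod 2)) (a) : wt H a ≤ H.card :=
  Finset.card_filter_le _ _

lemma zmod2_cases : ∀ t : ZMod 2, t = 0 ∨ t = 1 := by decide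

/-- generic partition identity -/
lemma part_lemma {α : Type*} (T : Finset α) (φ ψ : α → ZMod 2) :
    (T.filter fun t => φ t = 1).card + (T.filter fun t => ψ t = 1).card
      = (T.filter fun t => φ t + ψ t = 1).card
        + 2 * (T.filter fun t => φ t = 1 ∧ ψ t = 1).card := by
  classical
  have key : ∀ u w : ZMod 2,
      ((if u = 1 then 1 else 0) + if w = 1 then 1 else 0 : ℕ)
        = (if u + w = 1 then 1 else 0) + 2 * (if u = 1 ∧ w = 1 then 1 else 0) := by
    decide
  simp only [Finset.card_filter, ← Finset.sum_add_distrib, Finset.mul_sum]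
  exact Finset.sum_congr rfl fun x _ => key (φ x) (ψ x)

lemma sec_card (H : Finset (Fin v → ZMod 2)) (a) :
    (H.filter fun x => a ⬝ᵥ x = 0).card + wt H a = H.card := by
  classical
  have : (H.filter fun x => a ⬝ᵥ x = 0) = (H.filter fun x => ¬ (a ⬝ᵥ x = 1)) := by
    apply Finset.filter_congr
    intro x _
    rcases zmod2_cases (a ⬝ᵥ x) with h | h <;> simp [h]
  rw [this, wt, Nat.add_comm, Finset.card_filter_add_card_filter_not]

lemma half {x : Fin v → ZMod 2} (hx : x ≠ 0) :
    2 * (Finset.univ.filter fun a : Fin v → ZMod 2 => a ⬝ᵥ x = 1).card = 2 ^ v := by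
  classical
  obtain ⟨i, hi⟩ : ∃ i, x i ≠ 0 := by
    by_contra h
    push_neg at h
    exact hx (funext fun i => h i)
  have hx1 : x i = 1 := by
    rcases zmod2_cases (x i) with h | h
    · exact absurd h hi
    · exact h
  set s : Fin v → ZMod 2 := Pi.single i 1 with hs
  have hadd : ∀ a : Fin v → ZMod 2, (a + s) ⬝ᵥ x = a ⬝ᵥ x + 1 := by
    intro a
    rw [add_dotProduct, single_dotProduct, one_mul, hx1]
  have hss : ∀ a : Fin v → ZMod 2, a + s + s = a := by
    intro a
    funext j
    have : ∀ t u : ZMod 2, t + u + u = t := by decide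
    simp [this]
  have hcard : (Finset.univ.filter fun a : Fin v → ZMod 2 => a ⬝ᵥ x = 1).card
      = (Finset.univ.filter fun a : Fin v → ZMod 2 => a ⬝ᵥ x = 0).card := by
    apply Finset.card_bij (fun a _ => a + s)
    · intro a ha
      simp only [Finset.mem_filter, Finset.mem_univ, true_and] at ha ⊢
      rw [hadd, ha]; decide
    · intro a ha b hb hab
      have := congrArg (· + s) hab
      simpa [add_assoc, hss] using this
    · intro b hb
      simp only [Finset.mem_filter, Finset.mem_univ, true_and] at hb
      refine ⟨b + s, ?_, (hss b).symm ▸ rfl⟩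
      simp only [Finset.mem_filter, Finset.mem_univ, true_and]
      rw [hadd, hb]; decide
  have htot := Finset.card_filter_add_card_filter_not
    (s := (Finset.univ : Finset (Fin v → ZMod 2))) (p := fun a => a ⬝ᵥ x = 1)
  have hneg : (Finset.univ.filter fun a : Fin v → ZMod 2 => ¬ (a ⬝ᵥ x = 1))
      = (Finset.univ.filter fun a : Fin v → ZMod 2 => a ⬝ᵥ x = 0) := by
    apply Finset.filter_congr
    intro a _
    rcases zmod2_cases (a ⬝ᵥ x) with h | h <;> simp [h]
  have huniv : (Finset.univ : Finset (Fin v → ZMod 2)).card = 2 ^ v := by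
    simp [Finset.card_univ]
  rw [hneg, hcard] at htot
  omega



def P (x y : Fin v → ZMod 2) : ℕ :=
  (Finset.univ.filter fun a : Fin v → ZMod 2 => a ⬝ᵥ x = 1 ∧ a ⬝ᵥ y = 1).card

variable (half : ∀ {x : Fin v → ZMod 2}, x ≠ 0 →
    2 * (Finset.univ.filter fun a : Fin v → ZMod 2 => a ⬝ᵥ x = 1).card = 2 ^ v)
variable (part_lemma : ∀ {α : Type} (T : Finset α) (φ ψ : α → ZMod 2),
    (T.filter fun t => φ t = 1).card + (T.filter fun t => ψ t = 1).card
      = (T.filter fun t => φ t + ψ t = 1).card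
        + 2 * (T.filter fun t => φ t = 1 ∧ ψ t = 1).card)

lemma pair {x y : Fin v → ZMod 2} (hx : x ≠ 0) (hy : y ≠ 0) (hxy : x ≠ y) :
    4 * P x y = 2 ^ v := by
  classical
  have hxy0 : x + y ≠ 0 := by
    intro h
    apply hxy
    funext j
    have hj := congrFun h j
    have : ∀ s t : ZMod 2, s + t = 0 → s = t := by decide
    exact this _ _ hj
  have hp := part_lemma (Finset.univ : Finset (Fin v → ZMod 2))
    (fun a => a ⬝ᵥ x) (fun a => a ⬝ᵥ y)
  have hrw : (Finset.univ.filter fun a : Fin v → ZMod 2 => a ⬝ᵥ x + a ⬝ᵥ y = 1)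
      = (Finset.univ.filter fun a : Fin v → ZMod 2 => a ⬝ᵥ (x + y) = 1) := by
    apply Finset.filter_congr
    intro a _
    rw [dotProduct_add]
  rw [hrw] at hp
  have h1 := half hx
  have h2 := half hy
  have h3 := half hxy0
  unfold P
  omega

lemma M1 {H : Finset (Fin v → ZMod 2)} (h0 : 0 ∉ H) :
    2 * ∑ a : Fin v → ZMod 2, wt H a = H.card * 2 ^ v := by
  classical
  have step : ∑ a : Fin v → ZMod 2, wt H a
      = ∑ x ∈ H, (Finset.univ.filter fun a : Fin v → ZMod 2 => a ⬝ᵥ x = 1).card := by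
    simp only [wt, Finset.card_filter]
    exact Finset.sum_comm
  rw [step, Finset.mul_sum]
  rw [Finset.sum_congr rfl fun x hx => half (fun h => h0 (h ▸ hx))]
  simp [Finset.sum_const, mul_comm]

lemma M2 {H : Finset (Fin v → ZMod 2)} (h0 : 0 ∉ H) :
    4 * ∑ a : Fin v → ZMod 2, wt H a * wt H a = H.card * (H.card + 1) * 2 ^ v := by
  classical
  have step : ∑ a : Fin v → ZMod 2, wt H a * wt H a = ∑ x ∈ H, ∑ y ∈ H, P x y := by
    have e1 : ∀ a : Fin v → ZMod 2, wt H a * wt H a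
        = ∑ x ∈ H, ∑ y ∈ H, (if a ⬝ᵥ x = 1 ∧ a ⬝ᵥ y = 1 then 1 else 0) := by
      intro a
      rw [wt, Finset.card_filter, Finset.sum_mul_sum]
      exact Finset.sum_congr rfl fun x _ => Finset.sum_congr rfl fun y _ => by
        by_cases h1 : a ⬝ᵥ x = 1 <;> by_cases h2 : a ⬝ᵥ y = 1 <;> simp [h1, h2]
    rw [Finset.sum_congr rfl fun a _ => e1 a, Finset.sum_comm]
    refine Finset.sum_congr rfl fun x _ => ?_
    rw [Finset.sum_comm]
    exact Finset.sum_congr rfl fun y _ => (Finset.card_filter _ _).symm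
  rw [step, Finset.mul_sum]
  have inner : ∀ x ∈ H, 4 * ∑ y ∈ H, P x y = (H.card + 1) * 2 ^ v := by
    intro x hx
    have hxne : x ≠ 0 := fun h => h0 (h ▸ hx)
    have hsplit := Finset.add_sum_erase H (P x) hx
    have hdiag : 4 * P x x = 2 * 2 ^ v := by
      have : P x x = (Finset.univ.filter fun a : Fin v → ZMod 2 => a ⬝ᵥ x = 1).card := by
        unfold P
        congr 1
        apply Finset.filter_congr
        intro a _
        simp
      rw [this]
      have := half hxne
      omega
    have herase : ∑ y ∈ H.erase x, 4 * P x y = (H.card - 1) * 2 ^ v := by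
      rw [Finset.sum_congr rfl fun y hy => by
        have hyH := Finset.mem_of_mem_erase hy
        exact pair hxne (fun h => h0 (h ▸ hyH))
          (fun h => (Finset.ne_of_mem_erase hy) (h ▸ rfl))]
      rw [Finset.sum_const, Finset.card_erase_of_mem hx, smul_eq_mul]
    have hcard1 : 1 ≤ H.card := Finset.card_pos.2 ⟨x, hx⟩
    calc 4 * ∑ y ∈ H, P x y = 4 * P x x + ∑ y ∈ H.erase x, 4 * P x y := by
          rw [← hsplit, Nat.mul_add, Finset.mul_sum]
      _ = 2 * 2 ^ v + (H.card - 1) * 2 ^ v := by rw [hdiag, herase]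
      _ = (H.card + 1) * 2 ^ v := by
          have : 2 + (H.card - 1) = H.card + 1 := by omega
          rw [← add_mul, this]
  rw [Finset.sum_congr rfl inner, Finset.sum_const, smul_eq_mul]
  ring



/-- `H` is `2^r`-divisible: every functional weight is divisible by `2^r`. -/
def DivC (r : ℕ) (H : Finset (Fin v → ZMod 2)) : Prop :=
  ∀ a : Fin v → ZMod 2, a ≠ 0 → 2 ^ r ∣ wt H a

lemma div_wt_dvd {r : ℕ} {H : Finset (Fin v → ZMod 2)} (hD : DivC r H) (a : Fin v → ZMod 2) :
    2 ^ r ∣ wt H a := by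
  by_cases h : a = 0
  · rw [h, wt_zero]; exact dvd_zero _
  · exact hD a h

/-- partition identity relating weights on a section -/
lemma sec_wt (H : Finset (Fin v → ZMod 2)) (a b : Fin v → ZMod 2) :
    2 * wt (H.filter fun x => b ⬝ᵥ x = 0) a + wt H b = wt H a + wt H (a + b) := by
  classical
  have hp := part_lemma H (fun x => a ⬝ᵥ x) (fun x => b ⬝ᵥ x)
  have hrw : (H.filter fun x => a ⬝ᵥ x + b ⬝ᵥ x = 1) = (H.filter fun x => (a + b) ⬝ᵥ x = 1) := by
    apply Finset.filter_congr; intro x _; rw [add_dotProduct]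
  rw [hrw] at hp
  -- wt H a splits by b-value
  have hsplitA : wt H a = (H.filter fun x => a ⬝ᵥ x = 1 ∧ b ⬝ᵥ x = 1).card
      + (H.filter fun x => a ⬝ᵥ x = 1 ∧ b ⬝ᵥ x = 0).card := by
    rw [wt, ← Finset.filter_filter, ← Finset.filter_filter]
    rw [← Finset.card_filter_add_card_filter_not
      (s := H.filter fun x => a ⬝ᵥ x = 1) (p := fun x => b ⬝ᵥ x = 1)]
    have hfe : ((H.filter fun x => a ⬝ᵥ x = 1).filter fun x => ¬ b ⬝ᵥ x = 1)
        = ((H.filter fun x => a ⬝ᵥ x = 1).filter fun x => b ⬝ᵥ x = 0) := by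
      apply Finset.filter_congr
      intro x _
      rcases zmod2_cases (b ⬝ᵥ x) with h | h <;> simp [h]
    rw [hfe]
  have hsec : wt (H.filter fun x => b ⬝ᵥ x = 0) a
      = (H.filter fun x => a ⬝ᵥ x = 1 ∧ b ⬝ᵥ x = 0).card := by
    rw [wt, Finset.filter_filter]
    congr 1
    apply Finset.filter_congr
    intro x _
    constructor
    · rintro ⟨h1, h2⟩; exact ⟨h2, h1⟩
    · rintro ⟨h1, h2⟩; exact ⟨h2, h1⟩
  unfold wt at hsplitA hsec ⊢
  omega

/-- the section of a `2^r`-divisible set by a hyperplane is `2^(r-1)`-divisible. -/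
lemma div_section {r : ℕ} (hr : 1 ≤ r) {H : Finset (Fin v → ZMod 2)} (hD : DivC r H)
    (b : Fin v → ZMod 2) : DivC (r - 1) (H.filter fun x => b ⬝ᵥ x = 0) := by
  intro a _
  have key := sec_wt H a b
  have d1 := div_wt_dvd hD a
  have d2 := div_wt_dvd hD b
  have d3 := div_wt_dvd hD (a + b)
  have h2 : 2 ^ r ∣ 2 * wt (H.filter fun x => b ⬝ᵥ x = 0) a := by
    have hsub := Nat.dvd_sub (dvd_add d1 d3) d2
    have heq : wt H a + wt H (a + b) - wt H b
        = 2 * wt (H.filter fun x => b ⬝ᵥ x = 0) a := by omega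
    rwa [heq] at hsub
  have hrr : 2 ^ r = 2 * 2 ^ (r - 1) := by
    rw [← pow_succ']
    congr 1
    omega
  rw [hrr] at h2
  exact (mul_dvd_mul_iff_left (by norm_num : (2:ℕ) ≠ 0)).1 h2

/-- section cardinality -/
lemma sec_card_eq {H : Finset (Fin v → ZMod 2)} (a : Fin v → ZMod 2) :
    (H.filter fun x => a ⬝ᵥ x = 0).card = H.card - wt H a := by
  have := sec_card H a
  omega

lemma zero_notMem_filter {H : Finset (Fin v → ZMod 2)} (h0 : 0 ∉ H) (b : Fin v → ZMod 2) :
    0 ∉ (H.filter fun x => b ⬝ᵥ x = 0) := fun h => h0 (Finset.mem_of_mem_filter _ h)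

/-- Pattern D : all weights zero forces empty set. -/
lemma patD {H : Finset (Fin v → ZMod 2)} (h0 : 0 ∉ H)
    (hw : ∀ a : Fin v → ZMod 2, wt H a = 0) : H.card = 0 := by
  have hm := M1 h0
  rw [Finset.sum_congr rfl fun a _ => hw a, Finset.sum_const_zero] at hm
  have hz : H.card * 2 ^ v = 0 := by omega
  rcases Nat.mul_eq_zero.1 hz with h | h
  · exact h
  · exact absurd h (by positivity)

/-- Pattern A : weights in {0, c} force `card + 1 = 2c`. -/
lemma patA {H : Finset (Fin v → ZMod 2)} {c : ℕ} (h0 : 0 ∉ H)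
    (hw : ∀ a : Fin v → ZMod 2, wt H a = 0 ∨ wt H a = c) (hne : H.card ≠ 0) :
    H.card + 1 = 2 * c := by
  have hm1 := M1 h0
  have hm2 := M2 h0
  have hsq : ∀ a : Fin v → ZMod 2, wt H a * wt H a = c * wt H a := by
    intro a
    rcases hw a with h | h <;> rw [h] <;> ring
  rw [Finset.sum_congr rfl fun a _ => hsq a, ← Finset.mul_sum] at hm2
  -- 4 * (c * Σ) = N(N+1) 2^v ; 2Σ = N 2^v
  have h2 : 2 * c * (H.card * 2 ^ v) = H.card * (H.card + 1) * 2 ^ v := by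
    calc 2 * c * (H.card * 2 ^ v) = 2 * c * (2 * ∑ a : Fin v → ZMod 2, wt H a) := by rw [hm1]
      _ = 4 * (c * ∑ a : Fin v → ZMod 2, wt H a) := by ring
      _ = H.card * (H.card + 1) * 2 ^ v := hm2
  have hv : 0 < 2 ^ v := by positivity
  have e1 : (2 * c * H.card) * 2 ^ v = (H.card * (H.card + 1)) * 2 ^ v := by
    rw [mul_assoc]; exact h2
  have e2 := Nat.eq_of_mul_eq_mul_right hv e1
  have e3 : H.card * (2 * c) = H.card * (H.card + 1) := by rw [← e2]; ring
  have e4 := Nat.eq_of_mul_eq_mul_left (Nat.pos_of_ne_zero hne) e3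
  omega

/-- Pattern E : all weights ≤ c forces `card ≤ 2c - 1`. -/
lemma patE {H : Finset (Fin v → ZMod 2)} {c : ℕ} (h0 : 0 ∉ H) (hc : 0 < c)
    (hw : ∀ a : Fin v → ZMod 2, a ≠ 0 → wt H a ≤ c) : H.card ≤ 2 * c - 1 := by
  have hm1 := M1 h0
  have hsum : ∑ a : Fin v → ZMod 2, wt H a
      ≤ c * (2 ^ v - 1) := by
    have h1 : ∑ a : Fin v → ZMod 2, wt H a
        = ∑ a ∈ (Finset.univ.erase (0 : Fin v → ZMod 2)), wt H a := by
      rw [← Finset.add_sum_erase _ _ (Finset.mem_univ (0 : Fin v → ZMod 2)), wt_zero, zero_add]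
    rw [h1]
    calc ∑ a ∈ (Finset.univ.erase (0 : Fin v → ZMod 2)), wt H a
        ≤ ∑ _a ∈ (Finset.univ.erase (0 : Fin v → ZMod 2)), c :=
          Finset.sum_le_sum fun a ha => hw a (Finset.ne_of_mem_erase ha)
      _ = (2 ^ v - 1) * c := by
          rw [Finset.sum_const, smul_eq_mul, Finset.card_erase_of_mem (Finset.mem_univ _)]
          congr 2
          simp [Finset.card_univ]
      _ = c * (2 ^ v - 1) := by ring
  by_contra hcon
  push_neg at hcon
  have hN : 2 * c ≤ H.card := by omega
  have hv : 0 < 2 ^ v := by positivity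
  have h3 : 2 * c * 2 ^ v ≤ H.card * 2 ^ v := Nat.mul_le_mul_right _ hN
  have hchain : H.card * 2 ^ v ≤ 2 * c * (2 ^ v - 1) := by
    rw [mul_assoc]
    omega
  have hlt : 2 * c * (2 ^ v - 1) < 2 * c * 2 ^ v := by
    have hb : (2 ^ v - 1) < 2 ^ v := by omega
    exact Nat.mul_lt_mul_of_pos_left hb (by positivity)
  exact absurd (h3.trans hchain) (not_le.2 hlt)

/-- Pattern C : weights in {0, c, d}. -/
lemma patC {H : Finset (Fin v → ZMod 2)} {c d : ℕ} (h0 : 0 ∉ H)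
    (hw : ∀ a : Fin v → ZMod 2, wt H a = 0 ∨ wt H a = c ∨ wt H a = d) :
    2 * (c + d) * H.card * 2 ^ v + 4 * (c * d)
      ≤ (H.card * (H.card + 1) + 4 * (c * d)) * 2 ^ v := by
  classical
  have hm1 := M1 h0
  have hm2 := M2 h0
  -- pointwise : (c+d) * wt a ≤ wt a * wt a + c*d, for a ≠ 0 ; at a = 0 slack c*d
  have hpw : ∀ a : Fin v → ZMod 2, (c + d) * wt H a ≤ wt H a * wt H a + c * d := by
    intro a
    rcases hw a with h | h | h <;> rw [h] <;> nlinarith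
  have hsum : (c + d) * ∑ a : Fin v → ZMod 2, wt H a
      ≤ (∑ a : Fin v → ZMod 2, wt H a * wt H a) + c * d * (2 ^ v - 1) := by
    have e0 : ∀ (f : (Fin v → ZMod 2) → ℕ), ∑ a : Fin v → ZMod 2, f a
        = f 0 + ∑ a ∈ (Finset.univ.erase (0 : Fin v → ZMod 2)), f a := by
      intro f
      rw [Finset.add_sum_erase _ _ (Finset.mem_univ (0 : Fin v → ZMod 2))]
    rw [e0 (fun a => wt H a), e0 (fun a => wt H a * wt H a), wt_zero]
    simp only [Nat.zero_mul, Nat.mul_zero, zero_add, Nat.add_zero]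
    rw [Finset.mul_sum]
    have hle : ∑ a ∈ (Finset.univ.erase (0 : Fin v → ZMod 2)), (c + d) * wt H a
        ≤ ∑ a ∈ (Finset.univ.erase (0 : Fin v → ZMod 2)), (wt H a * wt H a + c * d) :=
      Finset.sum_le_sum fun a _ => hpw a
    rw [Finset.sum_add_distrib, Finset.sum_const, smul_eq_mul,
      Finset.card_erase_of_mem (Finset.mem_univ _)] at hle
    have : (Finset.univ : Finset (Fin v → ZMod 2)).card = 2 ^ v := by simp [Finset.card_univ]
    rw [this] at hle
    calc ∑ a ∈ Finset.univ.erase (0 : Fin v → ZMod 2), (c + d) * wt H a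
        ≤ (∑ a ∈ Finset.univ.erase (0 : Fin v → ZMod 2), wt H a * wt H a)
          + (2 ^ v - 1) * (c * d) := hle
      _ = (∑ a ∈ Finset.univ.erase (0 : Fin v → ZMod 2), wt H a * wt H a)
          + c * d * (2 ^ v - 1) := by ring
  -- multiply by 4
  have h4 : 4 * ((c + d) * ∑ a : Fin v → ZMod 2, wt H a)
      ≤ 4 * (∑ a : Fin v → ZMod 2, wt H a * wt H a) + 4 * (c * d * (2 ^ v - 1)) := by omega
  rw [hm2] at h4
  have hL : 4 * ((c + d) * ∑ a : Fin v → ZMod 2, wt H a)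
      = 2 * (c + d) * (2 * ∑ a : Fin v → ZMod 2, wt H a) := by ring
  rw [hL, hm1] at h4
  have hv : 1 ≤ 2 ^ v := Nat.one_le_two_pow
  calc 2 * (c + d) * H.card * 2 ^ v + 4 * (c * d)
      = 2 * (c + d) * (H.card * 2 ^ v) + 4 * (c * d) := by ring
    _ ≤ H.card * (H.card + 1) * 2 ^ v + 4 * (c * d * (2 ^ v - 1)) + 4 * (c * d) := by omega
    _ = H.card * (H.card + 1) * 2 ^ v + 4 * (c * d * (2 ^ v - 1) + c * d) := by ring
    _ = (H.card * (H.card + 1) + 4 * (c * d)) * 2 ^ v := by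
        have e : c * d * (2 ^ v - 1) + c * d = c * d * 2 ^ v := by
          calc c * d * (2 ^ v - 1) + c * d = c * d * ((2 ^ v - 1) + 1) := by ring
            _ = c * d * 2 ^ v := by congr 1; omega
        rw [e]; ring


lemma sec_of_wt {r : ℕ} (hr : 1 ≤ r) {H : Finset (Fin v → ZMod 2)} (h0 : 0 ∉ H)
    (hD : DivC r H) (a : Fin v → ZMod 2) :
    ∃ H' : Finset (Fin v → ZMod 2), 0 ∉ H' ∧ DivC (r - 1) H' ∧ H'.card = H.card - wt H a :=
  ⟨H.filter fun x => a ⬝ᵥ x = 0, zero_notMem_filter h0 a, div_section hr hD a, sec_card_eq a⟩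

lemma no1_1 {H : Finset (Fin v → ZMod 2)} (h0 : 0 ∉ H) (hD : DivC 1 H) : H.card ≠ 1 := by
  intro hc
  have hw : ∀ a : Fin v → ZMod 2, wt H a = 0 := by
    intro a
    by_cases ha : a = 0
    · rw [ha, wt_zero]
    · have h1 := hD a ha
      have h2 : wt H a ≤ 1 := hc ▸ wt_le H a
      omega
  have := patD h0 hw
  omega

lemma no1_2 {H : Finset (Fin v → ZMod 2)} (h0 : 0 ∉ H) (hD : DivC 1 H) : H.card ≠ 2 := by
  intro hc
  have hw : ∀ a : Fin v → ZMod 2, wt H a = 0 ∨ wt H a = 2 := by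
    intro a
    by_cases ha : a = 0
    · left; rw [ha, wt_zero]
    · have h1 := hD a ha
      have h2 : wt H a ≤ 2 := hc ▸ wt_le H a
      omega
  have := patA h0 hw (by omega)
  omega

lemma no2_small {H : Finset (Fin v → ZMod 2)} (h0 : 0 ∉ H) (hD : DivC 2 H) {N : ℕ}
    (hN : N ≤ 3) : H.card ≠ N ∨ H.card = 0 := by
  by_cases hc : H.card = N
  · right
    have hw : ∀ a : Fin v → ZMod 2, wt H a = 0 := by
      intro a
      by_cases ha : a = 0
      · rw [ha, wt_zero]
      · have h1 := hD a ha
        have h2 : wt H a ≤ N := hc ▸ wt_le H a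
        omega
    exact patD h0 hw
  · left; exact hc

lemma no2_1 {H : Finset (Fin v → ZMod 2)} (h0 : 0 ∉ H) (hD : DivC 2 H) : H.card ≠ 1 := by
  rcases no2_small h0 hD (N := 1) (by norm_num) with h | h <;> omega

lemma no2_2 {H : Finset (Fin v → ZMod 2)} (h0 : 0 ∉ H) (hD : DivC 2 H) : H.card ≠ 2 := by
  rcases no2_small h0 hD (N := 2) (by norm_num) with h | h <;> omega

lemma no2_5 {H : Finset (Fin v → ZMod 2)} (h0 : 0 ∉ H) (hD : DivC 2 H) : H.card ≠ 5 := by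
  intro hc
  have hban : ∀ a : Fin v → ZMod 2, wt H a ≠ 4 := by
    intro a hw4
    obtain ⟨H', h0', hD', hc'⟩ := sec_of_wt (by norm_num) h0 hD a
    exact no1_1 h0' hD' (by omega)
  have hw : ∀ a : Fin v → ZMod 2, wt H a = 0 := by
    intro a
    by_cases ha : a = 0
    · rw [ha, wt_zero]
    · have h1 := hD a ha
      have h2 : wt H a ≤ 5 := hc ▸ wt_le H a
      have h3 := hban a
      omega
  have := patD h0 hw
  omega

lemma no2_6 {H : Finset (Fin v → ZMod 2)} (h0 : 0 ∉ H) (hD : DivC 2 H) : H.card ≠ 6 := by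
  intro hc
  have hban : ∀ a : Fin v → ZMod 2, wt H a ≠ 4 := by
    intro a hw4
    obtain ⟨H', h0', hD', hc'⟩ := sec_of_wt (by norm_num) h0 hD a
    exact no1_2 h0' hD' (by omega)
  have hw : ∀ a : Fin v → ZMod 2, wt H a = 0 := by
    intro a
    by_cases ha : a = 0
    · rw [ha, wt_zero]
    · have h1 := hD a ha
      have h2 : wt H a ≤ 6 := hc ▸ wt_le H a
      have h3 := hban a
      omega
  have := patD h0 hw
  omega

lemma no2_9 {H : Finset (Fin v → ZMod 2)} (h0 : 0 ∉ H) (hD : DivC 2 H) : H.card ≠ 9 := by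
  intro hc
  have hban : ∀ a : Fin v → ZMod 2, wt H a ≠ 8 := by
    intro a hw8
    obtain ⟨H', h0', hD', hc'⟩ := sec_of_wt (by norm_num) h0 hD a
    exact no1_1 h0' hD' (by omega)
  have hw : ∀ a : Fin v → ZMod 2, wt H a = 0 ∨ wt H a = 4 := by
    intro a
    by_cases ha : a = 0
    · left; rw [ha, wt_zero]
    · have h1 := hD a ha
      have h2 : wt H a ≤ 9 := hc ▸ wt_le H a
      have h3 := hban a
      omega
  have := patA h0 hw (by omega)
  omega

lemma no2_10 {H : Finset (Fin v → ZMod 2)} (h0 : 0 ∉ H) (hD : DivC 2 H) : H.card ≠ 10 := by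
  intro hc
  have hban : ∀ a : Fin v → ZMod 2, wt H a ≠ 8 := by
    intro a hw8
    obtain ⟨H', h0', hD', hc'⟩ := sec_of_wt (by norm_num) h0 hD a
    exact no1_2 h0' hD' (by omega)
  have hw : ∀ a : Fin v → ZMod 2, wt H a = 0 ∨ wt H a = 4 := by
    intro a
    by_cases ha : a = 0
    · left; rw [ha, wt_zero]
    · have h1 := hD a ha
      have h2 : wt H a ≤ 10 := hc ▸ wt_le H a
      have h3 := hban a
      omega
  have := patA h0 hw (by omega)
  omega

lemma no2_13 {H : Finset (Fin v → ZMod 2)} (h0 : 0 ∉ H) (hD : DivC 2 H) : H.card ≠ 13 := by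
  intro hc
  have hban : ∀ a : Fin v → ZMod 2, wt H a ≠ 12 := by
    intro a hw12
    obtain ⟨H', h0', hD', hc'⟩ := sec_of_wt (by norm_num) h0 hD a
    exact no1_1 h0' hD' (by omega)
  have hw : ∀ a : Fin v → ZMod 2, wt H a = 0 ∨ wt H a = 4 ∨ wt H a = 8 := by
    intro a
    by_cases ha : a = 0
    · left; rw [ha, wt_zero]
    · have h1 := hD a ha
      have h2 : wt H a ≤ 13 := hc ▸ wt_le H a
      have h3 := hban a
      omega
  have := patC h0 (c := 4) (d := 8) hw
  rw [hc] at this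
  norm_num at this
  generalize 2 ^ v = X at this
  omega

lemma no3_small {H : Finset (Fin v → ZMod 2)} (h0 : 0 ∉ H) (hD : DivC 3 H) {N : ℕ}
    (hN : N ≤ 7) (hc : H.card = N) : H.card = 0 := by
  have hw : ∀ a : Fin v → ZMod 2, wt H a = 0 := by
    intro a
    by_cases ha : a = 0
    · rw [ha, wt_zero]
    · have h1 := hD a ha
      have h2 : wt H a ≤ N := hc ▸ wt_le H a
      omega
  exact patD h0 hw

lemma no3_1 {H : Finset (Fin v → ZMod 2)} (h0 : 0 ∉ H) (hD : DivC 3 H) : H.card ≠ 1 := by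
  intro hc; have := no3_small h0 hD (by norm_num : (1:ℕ) ≤ 7) hc; omega

lemma no3_3 {H : Finset (Fin v → ZMod 2)} (h0 : 0 ∉ H) (hD : DivC 3 H) : H.card ≠ 3 := by
  intro hc; have := no3_small h0 hD (by norm_num : (3:ℕ) ≤ 7) hc; omega

lemma no3_7 {H : Finset (Fin v → ZMod 2)} (h0 : 0 ∉ H) (hD : DivC 3 H) : H.card ≠ 7 := by
  intro hc; have := no3_small h0 hD (by norm_num : (7:ℕ) ≤ 7) hc; omega

lemma no3_18 {H : Finset (Fin v → ZMod 2)} (h0 : 0 ∉ H) (hD : DivC 3 H) : H.card ≠ 18 := by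
  intro hc
  have hban8 : ∀ a : Fin v → ZMod 2, wt H a ≠ 8 := by
    intro a hw8
    obtain ⟨H', h0', hD', hc'⟩ := sec_of_wt (by norm_num) h0 hD a
    exact no2_10 h0' hD' (by omega)
  have hban16 : ∀ a : Fin v → ZMod 2, wt H a ≠ 16 := by
    intro a hw16
    obtain ⟨H', h0', hD', hc'⟩ := sec_of_wt (by norm_num) h0 hD a
    exact no2_2 h0' hD' (by omega)
  have hw : ∀ a : Fin v → ZMod 2, wt H a = 0 := by
    intro a
    by_cases ha : a = 0
    · rw [ha, wt_zero]
    · have h1 := hD a ha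
      have h2 : wt H a ≤ 18 := hc ▸ wt_le H a
      have h3 := hban8 a
      have h4 := hban16 a
      omega
  have := patD h0 hw
  omega

lemma no3_22 {H : Finset (Fin v → ZMod 2)} (h0 : 0 ∉ H) (hD : DivC 3 H) : H.card ≠ 22 := by
  intro hc
  have hban16 : ∀ a : Fin v → ZMod 2, wt H a ≠ 16 := by
    intro a hw16
    obtain ⟨H', h0', hD', hc'⟩ := sec_of_wt (by norm_num) h0 hD a
    exact no2_6 h0' hD' (by omega)
  have hw : ∀ a : Fin v → ZMod 2, wt H a = 0 ∨ wt H a = 8 := by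
    intro a
    by_cases ha : a = 0
    · left; rw [ha, wt_zero]
    · have h1 := hD a ha
      have h2 : wt H a ≤ 22 := hc ▸ wt_le H a
      have h3 := hban16 a
      omega
  have := patA h0 hw (by omega)
  omega

lemma no3_33 {H : Finset (Fin v → ZMod 2)} (h0 : 0 ∉ H) (hD : DivC 3 H) : H.card ≠ 33 := by
  intro hc
  have hban24 : ∀ a : Fin v → ZMod 2, wt H a ≠ 24 := by
    intro a hw24
    obtain ⟨H', h0', hD', hc'⟩ := sec_of_wt (by norm_num) h0 hD a
    exact no2_9 h0' hD' (by omega)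
  have hban32 : ∀ a : Fin v → ZMod 2, wt H a ≠ 32 := by
    intro a hw32
    obtain ⟨H', h0', hD', hc'⟩ := sec_of_wt (by norm_num) h0 hD a
    exact no2_1 h0' hD' (by omega)
  have hw : ∀ a : Fin v → ZMod 2, a ≠ 0 → wt H a ≤ 16 := by
    intro a ha
    have h1 := hD a ha
    have h2 : wt H a ≤ 33 := hc ▸ wt_le H a
    have h3 := hban24 a
    have h4 := hban32 a
    omega
  have := patE h0 (by norm_num : (0:ℕ) < 16) hw
  omega

lemma no3_37 {H : Finset (Fin v → ZMod 2)} (h0 : 0 ∉ H) (hD : DivC 3 H) : H.card ≠ 37 := by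
  intro hc
  have hban24 : ∀ a : Fin v → ZMod 2, wt H a ≠ 24 := by
    intro a hw24
    obtain ⟨H', h0', hD', hc'⟩ := sec_of_wt (by norm_num) h0 hD a
    exact no2_13 h0' hD' (by omega)
  have hban32 : ∀ a : Fin v → ZMod 2, wt H a ≠ 32 := by
    intro a hw32
    obtain ⟨H', h0', hD', hc'⟩ := sec_of_wt (by norm_num) h0 hD a
    exact no2_5 h0' hD' (by omega)
  have hw : ∀ a : Fin v → ZMod 2, a ≠ 0 → wt H a ≤ 16 := by
    intro a ha
    have h1 := hD a ha
    have h2 : wt H a ≤ 37 := hc ▸ wt_le H a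
    have h3 := hban24 a
    have h4 := hban32 a
    omega
  have := patE h0 (by norm_num : (0:ℕ) < 16) hw
  omega

section Upper

/-- the finset of elements of a submodule -/
noncomputable def FU (U : Submodule (ZMod 2) (Fin v → ZMod 2)) : Finset (Fin v → ZMod 2) :=
  @Finset.filter _ (fun x => x ∈ U) (Classical.decPred _) Finset.univ

lemma mem_FU {U : Submodule (ZMod 2) (Fin v → ZMod 2)} {x} : x ∈ FU U ↔ x ∈ U := by
  classical
  simp [FU]

lemma card_FU {U : Submodule (ZMod 2) (Fin v → ZMod 2)}
    (h4 : Module.finrank (ZMod 2) U = 4) : (FU U).card = 16 := by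
  classical
  have h1 : (FU U).card = Fintype.card {x : Fin v → ZMod 2 // x ∈ U} := by
    rw [Fintype.card_subtype]
    congr 1
  rw [h1]
  have h2 : Fintype.card {x : Fin v → ZMod 2 // x ∈ U} = Fintype.card U :=
    Fintype.card_congr (Equiv.refl _)
  rw [h2, card_eq_pow_finrank (K := ZMod 2), h4]
  norm_num [ZMod.card]

/-- half counting within a translation-closed finset -/
lemma wt_half_closed {T : Finset (Fin v → ZMod 2)} {b x₀ : Fin v → ZMod 2}
    (hT : ∀ x, x ∈ T → x + x₀ ∈ T) (hb : b ⬝ᵥ x₀ = 1) :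
    2 * wt T b = T.card := by
  classical
  have hadd : ∀ a : Fin v → ZMod 2, b ⬝ᵥ (a + x₀) = b ⬝ᵥ a + 1 := by
    intro a
    rw [dotProduct_add, hb]
  have hss : ∀ a : Fin v → ZMod 2, a + x₀ + x₀ = a := by
    intro a
    funext j
    have : ∀ t u : ZMod 2, t + u + u = t := by decide
    simp [this]
  have hcard : (T.filter fun a => b ⬝ᵥ a = 1).card = (T.filter fun a => b ⬝ᵥ a = 0).card := by
    apply Finset.card_bij (fun a _ => a + x₀)
    · intro a ha
      simp only [Finset.mem_filter] at ha ⊢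
      refine ⟨hT a ha.1, ?_⟩
      rw [hadd, ha.2]; decide
    · intro a _ c _ hac
      have := congrArg (· + x₀) hac
      simpa [add_assoc, hss] using this
    · intro c hc
      simp only [Finset.mem_filter] at hc
      refine ⟨c + x₀, ?_, (hss c).symm ▸ rfl⟩
      simp only [Finset.mem_filter]
      refine ⟨hT c hc.1, ?_⟩
      rw [hadd, hc.2]; decide
  have htot := Finset.card_filter_add_card_filter_not
    (s := T) (p := fun a => b ⬝ᵥ a = 1)
  have hneg : (T.filter fun a => ¬ (b ⬝ᵥ a = 1)) = (T.filter fun a => b ⬝ᵥ a = 0) := by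
    apply Finset.filter_congr
    intro a _
    have : ∀ t : ZMod 2, t = 0 ∨ t = 1 := by decide
    rcases this (b ⬝ᵥ a) with h | h <;> simp [h]
  rw [hneg, hcard] at htot
  unfold wt
  omega

/-- the weight of any functional on a 4-dimensional submodule is 0 or 8 -/
lemma wt_FU {U : Submodule (ZMod 2) (Fin v → ZMod 2)}
    (h4 : Module.finrank (ZMod 2) U = 4) (b : Fin v → ZMod 2) :
    8 ∣ wt (FU U) b := by
  classical
  by_cases h : ∃ x₀ ∈ FU U, b ⬝ᵥ x₀ = 1
  · obtain ⟨x₀, hx₀, hb⟩ := h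
    have := wt_half_closed (T := FU U) (b := b) (x₀ := x₀)
      (fun x hx => mem_FU.2 (U.add_mem (mem_FU.1 hx) (mem_FU.1 hx₀))) hb
    rw [card_FU h4] at this
    omega
  · push_neg at h
    have : wt (FU U) b = 0 := by
      unfold wt
      rw [Finset.card_eq_zero]
      rw [Finset.filter_eq_empty_iff]
      intro x hx
      exact h x hx
    omega


/-- hole set of a partial spread -/
noncomputable def Holes (S : Finset (Submodule (ZMod 2) (Fin v → ZMod 2))) :
    Finset (Fin v → ZMod 2) :=
  @Finset.filter _ (fun x => x ≠ 0 ∧ ∀ U ∈ S, x ∉ U) (Classical.decPred _) Finset.univ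

lemma holes_spec {S : Finset (Submodule (ZMod 2) (Fin v → ZMod 2))}
    (hn : 4 ≤ v)
    (hdim : ∀ U ∈ S, Module.finrank (ZMod 2) U = 4)
    (hint : ∀ U ∈ S, ∀ W ∈ S, U ≠ W → U ⊓ W = ⊥) :
    0 ∉ Holes S ∧ 15 * S.card + (Holes S).card = 2 ^ v - 1 ∧ DivC 3 (Holes S) := by
  classical
  set C : Finset (Fin v → ZMod 2) := S.biUnion (fun U => (FU U).erase 0) with hC
  have hdisj : ∀ U ∈ S, ∀ W ∈ S, U ≠ W → Disjoint ((FU U).erase 0) ((FU W).erase 0) := by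
    intro U hU W hW hUW
    rw [Finset.disjoint_left]
    intro x hxU hxW
    have hx0 : x ≠ 0 := (Finset.mem_erase.1 hxU).1
    have hxm : x ∈ U ⊓ W := by
      rw [Submodule.mem_inf]
      exact ⟨mem_FU.1 (Finset.mem_of_mem_erase hxU), mem_FU.1 (Finset.mem_of_mem_erase hxW)⟩
    rw [hint U hU W hW hUW] at hxm
    exact hx0 (by simpa using hxm)
  have hcardC : C.card = 15 * S.card := by
    rw [hC, Finset.card_biUnion hdisj]
    rw [Finset.sum_congr rfl (fun U hU => by
      rw [Finset.card_erase_of_mem (mem_FU.2 U.zero_mem), card_FU (hdim U hU)])]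
    rw [Finset.sum_const, smul_eq_mul]
    ring
  have mem_Holes : ∀ x, x ∈ Holes S ↔ x ≠ 0 ∧ ∀ U ∈ S, x ∉ U := by
    intro x
    classical
    unfold Holes
    rw [Finset.filter_congr_decidable]
    constructor
    · intro hx
      exact (Finset.mem_filter.1 hx).2
    · intro hx
      exact Finset.mem_filter.2 ⟨Finset.mem_univ x, hx⟩
  have hHeq : Holes S = (Finset.univ.erase (0 : Fin v → ZMod 2)) \ C := by
    ext x
    rw [mem_Holes, Finset.mem_sdiff, Finset.mem_erase]
    constructor
    · rintro ⟨hx0, hall⟩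
      refine ⟨⟨hx0, Finset.mem_univ x⟩, fun hxC => ?_⟩
      rw [hC, Finset.mem_biUnion] at hxC
      obtain ⟨U, hU, hmem⟩ := hxC
      exact hall U hU (mem_FU.1 (Finset.mem_of_mem_erase hmem))
    · rintro ⟨⟨hx0, -⟩, hxC⟩
      refine ⟨hx0, fun U hU hmem => hxC ?_⟩
      rw [hC, Finset.mem_biUnion]
      exact ⟨U, hU, Finset.mem_erase.2 ⟨hx0, mem_FU.2 hmem⟩⟩
  have hCsub : C ⊆ Finset.univ.erase (0 : Fin v → ZMod 2) := by
    intro x hx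
    rw [hC, Finset.mem_biUnion] at hx
    obtain ⟨U, -, hxU⟩ := hx
    exact Finset.mem_erase.2 ⟨(Finset.mem_erase.1 hxU).1, Finset.mem_univ x⟩
  have hcard_univ_erase : (Finset.univ.erase (0 : Fin v → ZMod 2)).card = 2 ^ v - 1 := by
    rw [Finset.card_erase_of_mem (Finset.mem_univ _)]
    congr 1
    simp [Finset.card_univ]
  have h0H : 0 ∉ Holes S := fun h => ((mem_Holes 0).1 h).1 rfl
  have hcards : 15 * S.card + (Holes S).card = 2 ^ v - 1 := by
    rw [hHeq, Finset.card_sdiff_of_subset hCsub, hcard_univ_erase, hcardC]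
    have := Finset.card_le_card hCsub
    rw [hcardC, hcard_univ_erase] at this
    omega
  refine ⟨h0H, hcards, ?_⟩
  -- divisibility
  intro b hb
  have hsplit : wt (Finset.univ.erase (0 : Fin v → ZMod 2)) b = wt C b + wt (Holes S) b := by
    rw [hHeq]
    unfold wt
    rw [← Finset.card_union_of_disjoint (Finset.disjoint_filter_filter
      (Finset.disjoint_sdiff))]
    rw [← Finset.filter_union]
    congr 2
    exact (Finset.union_sdiff_of_subset hCsub).symm
  have hwC : 8 ∣ wt C b := by
    unfold wt
    rw [hC, Finset.filter_biUnion]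
    rw [Finset.card_biUnion (fun U hU W hW hUW =>
      Finset.disjoint_filter_filter (hdisj U hU W hW hUW))]
    apply Finset.dvd_sum
    intro U hU
    have herase : ((FU U).erase 0).filter (fun x => b ⬝ᵥ x = 1)
        = (FU U).filter (fun x => b ⬝ᵥ x = 1) := by
      rw [Finset.filter_erase]
      apply Finset.erase_eq_of_notMem
      intro h0
      have := (Finset.mem_filter.1 h0).2
      rw [dotProduct_zero] at this
      exact absurd this (by decide)
    rw [herase]
    exact wt_FU (hdim U hU) b
  have hwU : wt (Finset.univ.erase (0 : Fin v → ZMod 2)) b = 2 ^ (v - 1) := by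
    have herase : (Finset.univ.erase (0 : Fin v → ZMod 2)).filter (fun x => b ⬝ᵥ x = 1)
        = Finset.univ.filter (fun x => b ⬝ᵥ x = 1) := by
      rw [Finset.filter_erase]
      apply Finset.erase_eq_of_notMem
      intro h0
      have := (Finset.mem_filter.1 h0).2
      rw [dotProduct_zero] at this
      exact absurd this (by decide)
    have hhalf := half hb
    have hcomm : (Finset.univ.filter fun x : Fin v → ZMod 2 => b ⬝ᵥ x = 1)
        = (Finset.univ.filter fun a : Fin v → ZMod 2 => a ⬝ᵥ b = 1) := by
      apply Finset.filter_congr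
      intro x _
      rw [dotProduct_comm]
    rw [← hcomm] at hhalf
    have hpow : 2 ^ v = 2 * 2 ^ (v - 1) := by
      rw [← pow_succ']
      congr 1
      omega
    unfold wt
    rw [herase]
    omega
  have hdvd_pow : (8 : ℕ) ∣ 2 ^ (v - 1) := by
    have : (2:ℕ) ^ (v-1) = 8 * 2 ^ (v - 4) := by
      rw [show (8:ℕ) = 2 ^ 3 by norm_num, ← pow_add]
      congr 1
      omega
    rw [this]
    exact Dvd.intro _ rfl
  rw [hwU] at hsplit
  obtain ⟨k2, hk2⟩ := hdvd_pow
  obtain ⟨k1, hk1⟩ := hwC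
  rw [hk2, hk1] at hsplit
  have h8 : (8:ℕ) ∣ wt (Holes S) b := ⟨k2 - k1, by omega⟩
  simpa using h8

end Upper
/-- general partial-spread predicate -/
def PS (k : ℕ) {M : Type*} [AddCommGroup M] [Module (ZMod 2) M]
    (S : Finset (Submodule (ZMod 2) M)) : Prop :=
  (∀ U ∈ S, Module.finrank (ZMod 2) U = k) ∧
  ∀ U ∈ S, ∀ V ∈ S, U ≠ V → U ⊓ V = ⊥

lemma PS.map {k : ℕ} {M M' : Type*} [AddCommGroup M] [Module (ZMod 2) M]
    [AddCommGroup M'] [Module (ZMod 2) M'] [DecidableEq (Submodule (ZMod 2) M')]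
    (e : M ≃ₗ[ZMod 2] M')
    {S : Finset (Submodule (ZMod 2) M)} (h : PS k S) :
    PS k (S.image (Submodule.map (e : M →ₗ[ZMod 2] M'))) ∧
      (S.image (Submodule.map (e : M →ₗ[ZMod 2] M'))).card = S.card := by
  classical
  have hinj : Function.Injective (Submodule.map (e : M →ₗ[ZMod 2] M')) :=
    Submodule.map_injective_of_injective e.injective
  refine ⟨⟨?_, ?_⟩, Finset.card_image_of_injective _ hinj⟩
  · intro U hU
    obtain ⟨W, hW, rfl⟩ := Finset.mem_image.1 hU
    rw [LinearEquiv.finrank_map_eq]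
    exact h.1 W hW
  · intro U hU V hV hUV
    obtain ⟨U₀, hU₀, rfl⟩ := Finset.mem_image.1 hU
    obtain ⟨V₀, hV₀, rfl⟩ := Finset.mem_image.1 hV
    have hne : U₀ ≠ V₀ := fun hh => hUV (by rw [hh])
    rw [← Submodule.map_inf (e : M →ₗ[ZMod 2] M') e.injective, h.2 U₀ hU₀ V₀ hV₀ hne, Submodule.map_bot]

/-- the padding embedding -/
def padMap (n : ℕ) : (Fin 4 → ZMod 2) →ₗ[ZMod 2] (Fin n → ZMod 2) where
  toFun x i := if hi : (i : ℕ) < 4 then x ⟨i, hi⟩ else 0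
  map_add' x y := by
    funext i
    by_cases hi : (i : ℕ) < 4 <;> simp [hi]
  map_smul' c x := by
    funext i
    by_cases hi : (i : ℕ) < 4 <;> simp [hi]

lemma padMap_injective {n : ℕ} (hn : 4 ≤ n) : Function.Injective (padMap n) := by
  intro x y hxy
  funext j
  have hj : (j : ℕ) < n := lt_of_lt_of_le j.2 hn
  have := congrFun hxy ⟨j, hj⟩
  simpa [padMap, j.2] using this

/-- base case : a single 4-dimensional subspace -/
lemma base_spread (n : ℕ) (hn : 4 ≤ n) :
    ∃ S : Finset (Submodule (ZMod 2) (Fin n → ZMod 2)), PS 4 S ∧ S.card = 1 := by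
  classical
  refine ⟨{LinearMap.range (padMap n)}, ⟨?_, ?_⟩, Finset.card_singleton _⟩
  · intro U hU
    rw [Finset.mem_singleton] at hU
    subst hU
    rw [LinearMap.finrank_range_of_inj (padMap_injective hn), Module.finrank_fin_fun]
  · intro U hU V hV hUV
    rw [Finset.mem_singleton] at hU hV
    exact absurd (hU.trans hV.symm) hUV



lemma step_spread (N : ℕ) (hN : 4 ≤ N)
    (S' : Finset (Submodule (ZMod 2) (Fin N → ZMod 2)))
    (hS' : PS 4 S') :
    ∃ S : Finset (Submodule (ZMod 2) ((Fin 4 → ZMod 2) × GaloisField 2 N)),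
      PS 4 S ∧ S.card = 2 ^ N + S'.card := by
  classical
  haveI : Fact (Nat.Prime 2) := ⟨by norm_num⟩
  set E := GaloisField 2 N with hE
  haveI : Fintype E := Fintype.ofFinite E
  have hcardE : Fintype.card E = 2 ^ N := by
    have := GaloisField.card 2 N (by omega)
    simpa [Nat.card_eq_fintype_card] using this
  have hrankE : Module.finrank (ZMod 2) E = N := GaloisField.finrank 2 (by omega)
  obtain ⟨eE⟩ : Nonempty ((Fin N → ZMod 2) ≃ₗ[ZMod 2] E) :=
    FiniteDimensional.nonempty_linearEquiv_of_finrank_eq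
      (by rw [hrankE, Module.finrank_fin_fun])
  -- the injective embedding of the 4-dimensional space into E
  set ι : (Fin 4 → ZMod 2) →ₗ[ZMod 2] E := (eE : (Fin N → ZMod 2) →ₗ[ZMod 2] E) ∘ₗ padMap N
    with hι
  have hιinj : Function.Injective ι := by
    intro x y hxy
    exact padMap_injective hN (eE.injective hxy)
  -- graph subspaces
  set φ : E → ((Fin 4 → ZMod 2) →ₗ[ZMod 2] ((Fin 4 → ZMod 2) × E)) :=
    fun a => LinearMap.prod LinearMap.id ((LinearMap.mulLeft (ZMod 2) a).comp ι) with hφ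
  have hφapp : ∀ (a : E) (x : Fin 4 → ZMod 2), φ a x = (x, a * ι x) := by
    intro a x
    simp [hφ, LinearMap.prod_apply]
  set G : E → Submodule (ZMod 2) ((Fin 4 → ZMod 2) × E) := fun a => LinearMap.range (φ a)
    with hG
  have hGmem : ∀ (a : E) (z : (Fin 4 → ZMod 2) × E), z ∈ G a ↔ ∃ x, (x, a * ι x) = z := by
    intro a z
    rw [hG, LinearMap.mem_range]
    constructor
    · rintro ⟨x, hx⟩; exact ⟨x, by rw [← hφapp]; exact hx⟩
    · rintro ⟨x, hx⟩; exact ⟨x, by rw [hφapp]; exact hx⟩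
  have hφinj : ∀ a : E, Function.Injective (φ a) := by
    intro a x y hxy
    have := congrArg Prod.fst ((hφapp a x) ▸ (hφapp a y) ▸ hxy)
    simpa using this
  have hGrank : ∀ a : E, Module.finrank (ZMod 2) (G a) = 4 := by
    intro a
    rw [hG]
    rw [LinearMap.finrank_range_of_inj (hφinj a), Module.finrank_fin_fun]
  -- distinguished nonzero vector
  set xh : Fin 4 → ZMod 2 := fun _ => 1 with hxh
  have hxh0 : xh ≠ 0 := by
    intro h
    have := congrFun h 0
    simp [hxh] at this
  have hιxh : ι xh ≠ 0 := by
    intro h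
    exact hxh0 (hιinj (by simpa using h))
  have hGinj : Function.Injective G := by
    intro a b hab
    have hz : (xh, a * ι xh) ∈ G b := by
      rw [← hab, hGmem]
      exact ⟨xh, rfl⟩
    rw [hGmem] at hz
    obtain ⟨y, hy⟩ := hz
    have h1 : y = xh := congrArg Prod.fst hy
    have h2 : b * ι xh = a * ι xh := by
      have := congrArg Prod.snd hy
      simpa [h1] using this
    exact (mul_right_cancel₀ hιxh h2).symm
  have hGG : ∀ a b : E, a ≠ b → G a ⊓ G b = ⊥ := by
    intro a b hab
    rw [eq_bot_iff]
    intro z hz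
    rw [Submodule.mem_inf, hGmem, hGmem] at hz
    obtain ⟨⟨x, hx⟩, ⟨y, hy⟩⟩ := hz
    have h1 : x = y := by
      have := congrArg Prod.fst (hx.trans hy.symm)
      simpa using this
    have h2 : a * ι x = b * ι x := by
      have := congrArg Prod.snd (hx.trans hy.symm)
      rw [h1] at this ⊢
      simpa using this
    have h3 : ι x = 0 := by
      by_contra h
      exact hab (mul_right_cancel₀ h h2)
    have h4 : x = 0 := hιinj (by simpa using h3)
    have hz0 : z = 0 := by
      rw [← hx, h4]
      simp
    rw [hz0]
    exact Submodule.zero_mem ⊥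
  -- transport the old spread
  obtain ⟨hS''ps, hcard''⟩ := PS.map eE hS'
  set S'' := S'.image (Submodule.map (eE : (Fin N → ZMod 2) →ₗ[ZMod 2] E)) with hS''def
  set inr : E →ₗ[ZMod 2] ((Fin 4 → ZMod 2) × E) := LinearMap.inr (ZMod 2) _ _ with hinr
  have hinrinj : Function.Injective inr := LinearMap.inr_injective
  set T := S''.image (Submodule.map inr) with hTdef
  have hTdim : ∀ U ∈ T, Module.finrank (ZMod 2) U = 4 := by
    intro U hU
    obtain ⟨W, hW, rfl⟩ := Finset.mem_image.1 hU
    rw [← LinearEquiv.finrank_eq (Submodule.equivMapOfInjective inr hinrinj W)]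
    exact hS''ps.1 W hW
  have hTint : ∀ U ∈ T, ∀ V ∈ T, U ≠ V → U ⊓ V = ⊥ := by
    intro U hU V hV hUV
    obtain ⟨U₀, hU₀, rfl⟩ := Finset.mem_image.1 hU
    obtain ⟨V₀, hV₀, rfl⟩ := Finset.mem_image.1 hV
    have hne : U₀ ≠ V₀ := fun hh => hUV (by rw [hh])
    rw [← Submodule.map_inf inr hinrinj, hS''ps.2 U₀ hU₀ V₀ hV₀ hne, Submodule.map_bot]
  have hfst : ∀ U ∈ T, ∀ z ∈ U, Prod.fst z = (0 : Fin 4 → ZMod 2) := by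
    intro U hU z hz
    obtain ⟨W, hW, rfl⟩ := Finset.mem_image.1 hU
    obtain ⟨u, hu, rfl⟩ := Submodule.mem_map.1 hz
    rfl
  have hGT : ∀ (a : E), ∀ U ∈ T, G a ⊓ U = ⊥ := by
    intro a U hU
    rw [eq_bot_iff]
    intro z hz
    rw [Submodule.mem_inf] at hz
    obtain ⟨hz1, hz2⟩ := hz
    rw [hGmem] at hz1
    obtain ⟨x, hx⟩ := hz1
    have hx0 : x = 0 := by
      have h1 := hfst U hU z hz2
      rw [← hx] at h1
      exact h1
    have hz0 : z = 0 := by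
      rw [← hx, hx0]
      simp
    rw [hz0]
    exact Submodule.zero_mem ⊥
  have hGnotT : ∀ a : E, G a ∉ T := by
    intro a ha
    have hmem : (xh, a * ι xh) ∈ G a := (hGmem a _).2 ⟨xh, rfl⟩
    have := hfst _ ha _ hmem
    exact hxh0 this
  refine ⟨(Finset.univ.image G) ∪ T, ⟨?_, ?_⟩, ?_⟩
  · intro U hU
    rcases Finset.mem_union.1 hU with h | h
    · obtain ⟨a, -, rfl⟩ := Finset.mem_image.1 h
      exact hGrank a
    · exact hTdim U h
  · intro U hU V hV hUV
    rcases Finset.mem_union.1 hU with h | h <;> rcases Finset.mem_union.1 hV with h' | h'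
    · obtain ⟨a, -, rfl⟩ := Finset.mem_image.1 h
      obtain ⟨b, -, rfl⟩ := Finset.mem_image.1 h'
      exact hGG a b (fun hh => hUV (by rw [hh]))
    · obtain ⟨a, -, rfl⟩ := Finset.mem_image.1 h
      exact hGT a V h'
    · obtain ⟨b, -, rfl⟩ := Finset.mem_image.1 h'
      rw [inf_comm]
      exact hGT b U h
    · exact hTint U h V h' hUV
  · rw [Finset.card_union_of_disjoint]
    · rw [Finset.card_image_of_injective _ hGinj, Finset.card_univ, hcardE,
        Finset.card_image_of_injective _ (Submodule.map_injective_of_injective hinrinj),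
        hcard'']
    · rw [Finset.disjoint_left]
      rintro U hU hU'
      obtain ⟨a, -, rfl⟩ := Finset.mem_image.1 hU
      exact hGnotT a hU'

lemma exists_spread : ∀ n : ℕ, 4 ≤ n →
    ∃ S : Finset (Submodule (ZMod 2) (Fin n → ZMod 2)),
      PS 4 S ∧ 15 * S.card + 2 ^ (n % 4 + 4) = 2 ^ n + 15 := by
  intro n
  induction n using Nat.strong_induction_on with
  | _ n ih =>
  intro hn
  by_cases h8 : n < 8
  · obtain ⟨S, hS, hc⟩ := base_spread n hn
    refine ⟨S, hS, ?_⟩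
    rw [hc]
    have hmod : n % 4 + 4 = n := by omega
    rw [hmod]
    ring
  · classical
    haveI : Fact (Nat.Prime 2) := ⟨by norm_num⟩
    have hN4 : 4 ≤ n - 4 := by omega
    obtain ⟨S', hS', harith⟩ := ih (n - 4) (by omega) hN4
    obtain ⟨S₀, hS₀, hc₀⟩ := step_spread (n - 4) hN4 S' hS'
    have hrk : Module.finrank (ZMod 2) ((Fin 4 → ZMod 2) × GaloisField 2 (n - 4))
        = Module.finrank (ZMod 2) (Fin n → ZMod 2) := by
      rw [Module.finrank_prod, Module.finrank_fin_fun, Module.finrank_fin_fun,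
        GaloisField.finrank 2 (by omega : n - 4 ≠ 0)]
      omega
    obtain ⟨e⟩ := FiniteDimensional.nonempty_linearEquiv_of_finrank_eq hrk
    obtain ⟨hPS, hcard⟩ := PS.map e hS₀
    refine ⟨_, hPS, ?_⟩
    rw [hcard, hc₀]
    have hmod : (n - 4) % 4 = n % 4 := by omega
    rw [hmod] at harith
    have hpow : 2 ^ n = 16 * 2 ^ (n - 4) := by
      rw [show n = 4 + (n - 4) by omega, pow_add]
      norm_num
    omega


lemma upper_holes {v : ℕ} (hv : 9 ≤ v) {S : Finset (Submodule (ZMod 2) (Fin v → ZMod 2))}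
    (hdim : ∀ U ∈ S, Module.finrank (ZMod 2) U = 4)
    (hint : ∀ U ∈ S, ∀ W ∈ S, U ≠ W → U ⊓ W = ⊥) :
    ∃ h : ℕ, 15 * S.card + h = 2 ^ v - 1 ∧ h ≠ 1 ∧ h ≠ 3 ∧ h ≠ 7 ∧
      h ≠ 18 ∧ h ≠ 22 ∧ h ≠ 33 ∧ h ≠ 37 := by
  obtain ⟨h0, hcards, hdiv⟩ := holes_spec (by omega) hdim hint
  exact ⟨(Holes S).card, hcards, no3_1 h0 hdiv, no3_3 h0 hdiv, no3_7 h0 hdiv,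
    no3_18 h0 hdiv, no3_22 h0 hdiv, no3_33 h0 hdiv, no3_37 h0 hdiv⟩

lemma upper_count {v : ℕ} (hv : 4 ≤ v) {S : Finset (Submodule (ZMod 2) (Fin v → ZMod 2))}
    (hdim : ∀ U ∈ S, Module.finrank (ZMod 2) U = 4)
    (hint : ∀ U ∈ S, ∀ W ∈ S, U ≠ W → U ⊓ W = ⊥) :
    ∃ h : ℕ, 15 * S.card + h = 2 ^ v - 1 := by
  obtain ⟨h0, hcards, hdiv⟩ := holes_spec hv hdim hint
  exact ⟨(Holes S).card, hcards⟩

end SpreadAux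




/-- Maximum sizes of partial `4`-spreads in `𝔽_2^{4m}`, `𝔽_2^{4m+1}`, `𝔽_2^{4m+2}`,
and bounds for `𝔽_2^{4m+3}`. -/
theorem partial_four_spread_max (m : ℕ) (hm : 2 ≤ m) :
    IsGreatest {c : ℕ | ∃ S : Finset (Submodule (ZMod 2) (Fin (4 * m) → ZMod 2)),
        IsPartialSpread 4 S ∧ S.card = c} ((2 ^ (4 * m) - 1) / 15) ∧
    IsGreatest {c : ℕ | ∃ S : Finset (Submodule (ZMod 2) (Fin (4 * m + 1) → ZMod 2)),
        IsPartialSpread 4 S ∧ S.card = c} ((2 ^ (4 * m + 1) - 17) / 15) ∧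
    IsGreatest {c : ℕ | ∃ S : Finset (Submodule (ZMod 2) (Fin (4 * m + 2) → ZMod 2)),
        IsPartialSpread 4 S ∧ S.card = c} ((2 ^ (4 * m + 2) - 49) / 15) ∧
    (∃ S : Finset (Submodule (ZMod 2) (Fin (4 * m + 3) → ZMod 2)),
        IsPartialSpread 4 S ∧ (2 ^ (4 * m + 3) - 113) / 15 ≤ S.card) ∧
    (∀ S : Finset (Submodule (ZMod 2) (Fin (4 * m + 3) → ZMod 2)),
        IsPartialSpread 4 S → S.card ≤ (2 ^ (4 * m + 3) - 53) / 15) := by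
  have hX : (16:ℕ) ^ m % 15 = 1 := by
    rw [Nat.pow_mod]
    norm_num
  have hX2 : 256 ≤ (16:ℕ) ^ m := by
    calc (256:ℕ) = 16 ^ 2 := by norm_num
      _ ≤ 16 ^ m := Nat.pow_le_pow_right (by norm_num) hm
  have p0 : 2 ^ (4 * m) = 16 ^ m := by
    rw [pow_mul]
    norm_num
  have p1 : 2 ^ (4 * m + 1) = 2 * 16 ^ m := by
    rw [pow_succ, p0]
    ring
  have p2 : 2 ^ (4 * m + 2) = 4 * 16 ^ m := by
    rw [pow_add, p0]
    ring
  have p3 : 2 ^ (4 * m + 3) = 8 * 16 ^ m := by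
    rw [pow_add, p0]
    ring
  refine ⟨⟨?_, ?_⟩, ⟨?_, ?_⟩, ⟨?_, ?_⟩, ?_, ?_⟩
  · -- membership (a)
    obtain ⟨S0, hPS0, har⟩ := SpreadAux.exists_spread (4 * m) (by omega)
    have hmod : (4 * m) % 4 + 4 = 4 := by omega
    rw [hmod] at har
    norm_num at har
    refine ⟨S0, ⟨hPS0.1, hPS0.2⟩, ?_⟩
    rw [p0] at har ⊢
    omega
  · -- upper (a)
    rintro c ⟨S, hS, rfl⟩
    obtain ⟨h, hcards⟩ := SpreadAux.upper_count (by omega) hS.1 hS.2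
    rw [p0] at hcards ⊢
    omega
  · -- membership (b)
    obtain ⟨S0, hPS0, har⟩ := SpreadAux.exists_spread (4 * m + 1) (by omega)
    have hmod : (4 * m + 1) % 4 + 4 = 5 := by omega
    rw [hmod] at har
    norm_num at har
    refine ⟨S0, ⟨hPS0.1, hPS0.2⟩, ?_⟩
    rw [p1] at har ⊢
    omega
  · -- upper (b)
    rintro c ⟨S, hS, rfl⟩
    obtain ⟨h, hcards, h1, h3, h7, h18, h22, h33, h37⟩ :=
      SpreadAux.upper_holes (by omega) hS.1 hS.2
    rw [p1] at hcards ⊢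
    omega
  · -- membership (c)
    obtain ⟨S0, hPS0, har⟩ := SpreadAux.exists_spread (4 * m + 2) (by omega)
    have hmod : (4 * m + 2) % 4 + 4 = 6 := by omega
    rw [hmod] at har
    norm_num at har
    refine ⟨S0, ⟨hPS0.1, hPS0.2⟩, ?_⟩
    rw [p2] at har ⊢
    omega
  · -- upper (c)
    rintro c ⟨S, hS, rfl⟩
    obtain ⟨h, hcards, h1, h3, h7, h18, h22, h33, h37⟩ :=
      SpreadAux.upper_holes (by omega) hS.1 hS.2
    rw [p2] at hcards ⊢
    omega
  · -- existence (d)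
    obtain ⟨S0, hPS0, har⟩ := SpreadAux.exists_spread (4 * m + 3) (by omega)
    have hmod : (4 * m + 3) % 4 + 4 = 7 := by omega
    rw [hmod] at har
    norm_num at har
    refine ⟨S0, ⟨hPS0.1, hPS0.2⟩, ?_⟩
    rw [p3] at har ⊢
    omega
  · -- upper (d)
    intro S hS
    obtain ⟨h, hcards, h1, h3, h7, h18, h22, h33, h37⟩ :=
      SpreadAux.upper_holes (by omega) hS.1 hS.2
    rw [p3] at hcards ⊢
    omega
end
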